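/- Let G be a finite simple graph on n vertices, let ρ ≥ 1 be a real number, and let φ' be a ρ-approximate MaxIS coloring of G. Then for every real p > 0 and every proper coloring φ of G, M_p(φ) ≤ ρ (p+1)^{1/p} · M_p(φ'). In particular (ρ = 1), the coloring obtained by iteratively removing a maximum independent set approximates the maximum p-mean graph coloring problem within a factor of (p+1)^{1/p}. -/

import Mathlib

open Finset

variable {V : Type*} [Fintype V] [DecidableEq V]

/-- A proper coloring of `G`: adjacent vertices receive different colors. -/
def IsProperColoring (G : SimpleGraph V) (φ : V → ℕ) : Prop :=
  ∀ v w : V, G.Adj v w → φ v ≠ φ w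

/-- `c_i`: the size of the color class `i`. -/
def classSize (φ : V → ℕ) (i : ℕ) : ℕ :=
  (Finset.univ.filter fun w => φ w = i).card

/-- `a_v`: the size of the color class containing `v`. -/
def classOfSize (φ : V → ℕ) (v : V) : ℕ := classSize φ (φ v)

/-- The generalized `p`-mean of the values `a_v` of a coloring. -/
noncomputable def colPMean (φ : V → ℕ) (p : ℝ) : ℝ :=
  ((1 / (Fintype.card V : ℝ)) * ∑ v : V, (classOfSize φ v : ℝ) ^ p) ^ (1 / p)

/-- An independent set of vertices. -/
def IsIndep (G : SimpleGraph V) (s : Finset V) : Prop :=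
  ∀ v ∈ s, ∀ w ∈ s, v ≠ w → ¬G.Adj v w

/-- A `ρ`-approximate MaxIS coloring: a proper coloring whose color classes can be ordered
`P 0, …, P (m-1)` so that each `P j` is an independent set of the graph that remains after
removing the previous classes, of size at least `1/ρ` times the independence number of the
remaining graph. -/
def IsRhoApproxMaxISColoring (G : SimpleGraph V) (ρ : ℝ) (φ : V → ℕ) : Prop :=
  IsProperColoring G φ ∧
  ∃ (m : ℕ) (P : ℕ → Finset V),
    (∀ v : V, ∃ j < m, v ∈ P j) ∧
    (∀ j < m,
      P j ⊆ Finset.univ \ (Finset.range j).biUnion P ∧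
      IsIndep G (P j) ∧
      ∀ T : Finset V, T ⊆ Finset.univ \ (Finset.range j).biUnion P →
        IsIndep G T → (T.card : ℝ) ≤ ρ * (P j).card) ∧
    (∀ j < m, ∀ v ∈ P j, (Finset.univ.filter fun w => φ w = φ v) = P j)

/-- The entropy (in bits) of a proper coloring: the entropy of the distribution obtained by
dividing the sizes of the (nonempty) color classes by `n`. -/
noncomputable def colEntropy (φ : V → ℕ) : ℝ :=
  -∑ i ∈ Finset.univ.image φ,
      ((classSize φ i : ℝ) / (Fintype.card V : ℝ)) *
        Real.logb 2 ((classSize φ i : ℝ) / (Fintype.card V : ℝ))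

/-- if `φ'` is a `ρ`-approximate MaxIS coloring of `G` (with `ρ ≥ 1`), then for
every `p > 0` and every proper coloring `φ` of `G`,
`M_p(φ) ≤ ρ (p+1)^{1/p} · M_p(φ')`. -/
lemma auxStepIneq {p : ℝ} (hp : 0 < p) {N : ℝ} (hN : 0 ≤ N) :
    (N + 1) ^ (p + 1) ≤ N ^ (p + 1) + (p + 1) * (N + 1) ^ p := by
  have h1 : (0:ℝ) < N + 1 := by linarith
  have hber := one_add_mul_self_le_rpow_one_add
    (s := -(1/(N+1))) (p := p+1)
    (by rw [neg_le, neg_neg]; rw [div_le_one h1]; linarith)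
    (by linarith)
  have hbase : (1 : ℝ) + -(1/(N+1)) = N / (N+1) := by field_simp; ring
  rw [hbase] at hber
  have hpow : (N/(N+1)) ^ (p+1) * (N+1)^(p+1) = N ^ (p+1) := by
    rw [← Real.mul_rpow (by positivity) h1.le, div_mul_cancel₀ _ h1.ne']
  have h3 : (1 + (p+1) * -(1/(N+1))) * (N+1)^(p+1) ≤ (N/(N+1))^(p+1) * (N+1)^(p+1) :=
    mul_le_mul_of_nonneg_right hber (Real.rpow_nonneg h1.le _)
  rw [hpow] at h3
  have h4 : (N+1)^(p+1) = (N+1)^p * (N+1) := Real.rpow_add_one h1.ne' p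
  have h5 : (1 + (p+1) * -(1/(N+1))) * (N+1)^(p+1)
      = (N+1)^(p+1) - (p+1) * (N+1)^p := by
    rw [h4]; field_simp; ring
  rw [h5] at h3
  linarith

lemma auxSumIneq {p : ℝ} (hp : 0 < p) (n : ℕ) :
    (n : ℝ) ^ (p + 1) ≤ (p + 1) * ∑ k ∈ Finset.Icc 1 n, (k : ℝ) ^ p := by
  induction n with
  | zero => simp [Real.zero_rpow (by positivity : p + 1 ≠ 0)]
  | succ n ih =>
    rw [Finset.sum_Icc_succ_top (Nat.succ_le_succ (Nat.zero_le n)), mul_add]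
    push_cast
    have hstep := auxStepIneq hp (N := (n:ℝ)) (Nat.cast_nonneg n)
    linarith

theorem rhoApproxMaxIS_pMean (G : SimpleGraph V) (ρ : ℝ) (hρ : 1 ≤ ρ)
    (φ' : V → ℕ) (hφ' : IsRhoApproxMaxISColoring G ρ φ')
    (p : ℝ) (hp : 0 < p) (φ : V → ℕ) (hφ : IsProperColoring G φ) :
    colPMean φ p ≤ ρ * (p + 1) ^ (1 / p) * colPMean φ' p := by
  classical
  obtain ⟨hprop', m, P, hcover, hstep, hclass⟩ := hφ'
  set n := Fintype.card V with hn
  choose stage hstage1 hstage2 using hcover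
  set e := Fintype.equivFin V with he
  set key : V → ℕ := fun v => stage v * n + (e v : ℕ) with hkeydef
  have hkeylt : ∀ v w : V, stage v < stage w → key v < key w := by
    intro v w hlt
    calc key v = stage v * n + (e v : ℕ) := rfl
      _ < stage v * n + n := by have := (e v).isLt; omega
      _ = (stage v + 1) * n := by ring
      _ ≤ stage w * n := Nat.mul_le_mul_right n hlt
      _ ≤ key w := Nat.le_add_right _ _
  have hkeymono : ∀ v w : V, key v ≤ key w → stage v ≤ stage w := by
    intro v w h
    by_contra hc
    push_neg at hc
    exact absurd h (not_le.mpr (hkeylt w v hc))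
  have hkeyinj : Function.Injective key := by
    intro v w h
    have hsvw : stage v = stage w := by
      rcases Nat.lt_trichotomy (stage v) (stage w) with h1 | h1 | h1
      · exact absurd h (hkeylt v w h1).ne
      · exact h1
      · exact absurd h.symm (hkeylt w v h1).ne
    have hev : (e v : ℕ) = (e w : ℕ) := by
      simp only [hkeydef] at h
      rw [hsvw] at h
      omega
    exact e.injective (Fin.ext hev)
  set r : V → ℕ := fun v =>
    ((Finset.univ.filter fun w => φ w = φ v).filter fun w => key v ≤ key w).card with hrdef
  have rdef : ∀ v, r v =
      ((Finset.univ.filter fun w => φ w = φ v).filter fun w => key v ≤ key w).card :=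
    fun _ => rfl
  have hnotmem : ∀ w : V, ∀ k, k < stage w → w ∉ P k := by
    intro w k hk hwk
    have h2 := (hstep (stage w) (hstage1 w)).1 (hstage2 w)
    rw [Finset.mem_sdiff] at h2
    exact h2.2 (Finset.mem_biUnion.mpr ⟨k, Finset.mem_range.mpr hk, hwk⟩)
  have ha' : ∀ v : V, classOfSize φ' v = (P (stage v)).card := by
    intro v
    have hcl := hclass (stage v) (hstage1 v) v (hstage2 v)
    simp only [classOfSize, classSize, hcl]
  have hrle : ∀ v : V, (r v : ℝ) ≤ ρ * (classOfSize φ' v : ℝ) := by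
    intro v
    obtain ⟨hsub, hind, hmax⟩ := hstep (stage v) (hstage1 v)
    have hTsub : ((Finset.univ.filter fun w => φ w = φ v).filter fun w => key v ≤ key w) ⊆
        Finset.univ \ (Finset.range (stage v)).biUnion P := by
      intro w hw
      rw [Finset.mem_sdiff]
      refine ⟨Finset.mem_univ w, ?_⟩
      rw [Finset.mem_biUnion]
      rintro ⟨k, hk, hwk⟩
      rw [Finset.mem_range] at hk
      have hsw : stage v ≤ stage w := hkeymono v w (Finset.mem_filter.mp hw).2
      exact hnotmem w k (lt_of_lt_of_le hk hsw) hwk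
    have hTind : IsIndep G ((Finset.univ.filter fun w => φ w = φ v).filter fun w => key v ≤ key w) := by
      intro a ha b hb hab hadj
      have h1 := (Finset.mem_filter.mp (Finset.mem_filter.mp ha).1).2
      have h2 := (Finset.mem_filter.mp (Finset.mem_filter.mp hb).1).2
      exact hφ a b hadj (h1.trans h2.symm)
    have hbd := hmax _ hTsub hTind
    rw [rdef v, ha' v]
    exact_mod_cast hbd
  -- per-class inequality
  have hclassineq : ∀ i ∈ Finset.univ.image φ,
      ((Finset.univ.filter fun w => φ w = i).card : ℝ) ^ (p+1)
        ≤ (p+1) * ∑ v ∈ Finset.univ.filter (fun w => φ w = i), (r v : ℝ) ^ p := by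
    intro i hi
    set C := Finset.univ.filter fun w => φ w = i with hC
    have hrC : ∀ v ∈ C, r v = (C.filter fun w => key v ≤ key w).card := by
      intro v hv
      have hφv : φ v = i := (Finset.mem_filter.mp hv).2
      rw [rdef v, hφv]
    have keylt : ∀ a ∈ C, ∀ b ∈ C, key a < key b → r b < r a := by
      intro a ha b hb hab
      rw [hrC a ha, hrC b hb]
      apply Finset.card_lt_card
      rw [Finset.ssubset_def]
      constructor
      · intro u hu
        rw [Finset.mem_filter] at hu ⊢
        exact ⟨hu.1, le_of_lt (lt_of_lt_of_le hab hu.2)⟩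
      · intro hsub2
        have haa : a ∈ C.filter (fun u => key a ≤ key u) :=
          Finset.mem_filter.mpr ⟨ha, le_refl _⟩
        have := Finset.mem_filter.mp (hsub2 haa)
        exact absurd this.2 (not_le.mpr hab)
    have hinj : ∀ v ∈ C, ∀ w ∈ C, r v = r w → v = w := by
      intro v hv w hw hrvw
      by_contra hne
      have hkne : key v ≠ key w := fun h => hne (hkeyinj h)
      rcases hkne.lt_or_gt with hlt | hlt
      · have := keylt v hv w hw hlt; omega
      · have := keylt w hw v hv hlt; omega
    have himg : C.image r = Finset.Icc 1 C.card := by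
      apply Finset.eq_of_subset_of_card_le
      · intro k hk
        obtain ⟨v, hv, rfl⟩ := Finset.mem_image.mp hk
        rw [Finset.mem_Icc]
        constructor
        · rw [hrC v hv]
          exact Finset.card_pos.mpr ⟨v, Finset.mem_filter.mpr ⟨hv, le_refl _⟩⟩
        · rw [hrC v hv]
          exact Finset.card_le_card (Finset.filter_subset _ _)
      · rw [Nat.card_Icc, Finset.card_image_of_injOn hinj]
        omega
    have hsum : ∑ k ∈ Finset.Icc 1 C.card, (k:ℝ)^p = ∑ v ∈ C, (r v : ℝ)^p := by
      rw [← himg, Finset.sum_image hinj]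
    rw [← hsum]
    exact auxSumIneq hp C.card
  have hfiber : ∀ (f : V → ℝ), ∑ v : V, f v =
      ∑ i ∈ Finset.univ.image φ, ∑ v ∈ Finset.univ.filter (fun w => φ w = i), f v := by
    intro f
    exact (Finset.sum_fiberwise_of_maps_to
      (fun v _ => Finset.mem_image_of_mem φ (Finset.mem_univ v)) f).symm
  have hmainA : ∑ v : V, (classOfSize φ v : ℝ)^p
      = ∑ i ∈ Finset.univ.image φ, ((Finset.univ.filter fun w => φ w = i).card : ℝ)^(p+1) := by
    rw [hfiber (fun v => (classOfSize φ v:ℝ)^p)]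
    apply Finset.sum_congr rfl
    intro i hi
    have hconst : ∀ v ∈ Finset.univ.filter (fun w => φ w = i),
        (classOfSize φ v : ℝ)^p = ((Finset.univ.filter fun w => φ w = i).card : ℝ)^p := by
      intro v hv
      have hiv : φ v = i := (Finset.mem_filter.mp hv).2
      simp only [classOfSize, classSize, hiv]
    rw [Finset.sum_congr rfl hconst, Finset.sum_const, nsmul_eq_mul]
    obtain ⟨v, hvmem, hvi⟩ := Finset.mem_image.mp hi
    have hpos : 0 < (Finset.univ.filter fun w => φ w = i).card :=
      Finset.card_pos.mpr ⟨v, Finset.mem_filter.mpr ⟨Finset.mem_univ v, hvi⟩⟩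
    have hne0 : ((Finset.univ.filter fun w => φ w = i).card : ℝ) ≠ 0 := by
      exact_mod_cast hpos.ne'
    rw [Real.rpow_add_one hne0 p]
    ring
  have hmain : ∑ v : V, (classOfSize φ v : ℝ)^p
      ≤ (p+1) * ρ^p * ∑ v : V, (classOfSize φ' v : ℝ)^p := by
    calc ∑ v : V, (classOfSize φ v : ℝ)^p
        = ∑ i ∈ Finset.univ.image φ, ((Finset.univ.filter fun w => φ w = i).card : ℝ)^(p+1) :=
          hmainA
      _ ≤ ∑ i ∈ Finset.univ.image φ,
            (p+1) * ∑ v ∈ Finset.univ.filter (fun w => φ w = i), (r v : ℝ)^p :=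
          Finset.sum_le_sum hclassineq
      _ = (p+1) * ∑ v : V, (r v : ℝ)^p := by
          rw [← Finset.mul_sum, ← hfiber (fun v => (r v:ℝ)^p)]
      _ ≤ (p+1) * ∑ v : V, (ρ^p * (classOfSize φ' v : ℝ)^p) := by
          apply mul_le_mul_of_nonneg_left _ (by linarith)
          apply Finset.sum_le_sum
          intro v _
          rw [← Real.mul_rpow (by linarith : (0:ℝ) ≤ ρ) (Nat.cast_nonneg _)]
          exact Real.rpow_le_rpow (Nat.cast_nonneg _) (hrle v) hp.le
      _ = (p+1) * ρ^p * ∑ v : V, (classOfSize φ' v : ℝ)^p := by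
          rw [← Finset.mul_sum]; ring
  -- final assembly
  have hS : 0 ≤ ∑ v : V, (classOfSize φ v : ℝ)^p :=
    Finset.sum_nonneg fun v _ => Real.rpow_nonneg (Nat.cast_nonneg _) _
  have hS' : 0 ≤ ∑ v : V, (classOfSize φ' v : ℝ)^p :=
    Finset.sum_nonneg fun v _ => Real.rpow_nonneg (Nat.cast_nonneg _) _
  have hninv : (0:ℝ) ≤ 1 / (n : ℝ) := by positivity
  have hρ0 : (0:ℝ) ≤ ρ := by linarith
  have h1 : (1/(n:ℝ)) * ∑ v : V, (classOfSize φ v:ℝ)^p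
      ≤ (p+1) * ρ^p * ((1/(n:ℝ)) * ∑ v : V, (classOfSize φ' v:ℝ)^p) := by
    calc (1/(n:ℝ)) * ∑ v : V, (classOfSize φ v:ℝ)^p
        ≤ (1/(n:ℝ)) * ((p+1) * ρ^p * ∑ v : V, (classOfSize φ' v:ℝ)^p) :=
          mul_le_mul_of_nonneg_left hmain hninv
      _ = (p+1) * ρ^p * ((1/(n:ℝ)) * ∑ v : V, (classOfSize φ' v:ℝ)^p) := by ring
  show ((1/(n:ℝ)) * ∑ v : V, (classOfSize φ v:ℝ)^p) ^ (1/p)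
      ≤ ρ * (p+1)^(1/p) * ((1/(n:ℝ)) * ∑ v : V, (classOfSize φ' v:ℝ)^p) ^ (1/p)
  have hX : (0:ℝ) ≤ (1/(n:ℝ)) * ∑ v : V, (classOfSize φ' v:ℝ)^p := by positivity
  calc ((1/(n:ℝ)) * ∑ v : V, (classOfSize φ v:ℝ)^p) ^ (1/p)
      ≤ ((p+1) * ρ^p * ((1/(n:ℝ)) * ∑ v : V, (classOfSize φ' v:ℝ)^p)) ^ (1/p) :=
        Real.rpow_le_rpow (by positivity) h1 (by positivity)
    _ = (p+1)^(1/p) * (ρ^p)^(1/p) * ((1/(n:ℝ)) * ∑ v : V, (classOfSize φ' v:ℝ)^p) ^ (1/p) := by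
        rw [Real.mul_rpow (by positivity) hX, Real.mul_rpow (by positivity) (by positivity)]
    _ = ρ * (p+1)^(1/p) * ((1/(n:ℝ)) * ∑ v : V, (classOfSize φ' v:ℝ)^p) ^ (1/p) := by
        have hρp : (ρ^p)^(1/p) = ρ := by
          rw [← Real.rpow_mul hρ0, mul_one_div, div_self hp.ne', Real.rpow_one]
        rw [hρp]; ring
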